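/- Suppose b₁ = 0, b₂⁺ = 1, and b₂⁻ ≥ 0. Set σ = b₂⁺ − b₂⁻, e = 2 − 2b₁ + b₂⁺ + b₂⁻, χ_f = (σ+e)/4 + (g−1), K_f² = 3σ + 2e + 8(g−1). Then χ_f = g, and if moreover K_f² ≥ 4(g−1), then for g ≥ 2 the slope λ_f = K_f²/χ_f satisfies (4g−4)/g ≤ λ_f ≤ 8 + 1/g. -/
import Mathlib


/-- Slope bounds for b₁ = 0, b₂⁺ = 1: χ_f = g and
(4g−4)/g ≤ λ_f ≤ 8 + 1/g whenever K_f² ≥ 4(g−1). -/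
theorem slope_bounds_b1_zero (g : ℕ) (hg : 2 ≤ g) (b₂m : ℕ)
    (σ e χ K : ℚ)
    (hσ : σ = 1 - (b₂m : ℚ)) (he : e = 2 - 2 * 0 + 1 + (b₂m : ℚ))
    (hχ : χ = (σ + e) / 4 + ((g : ℚ) - 1))
    (hK : K = 3 * σ + 2 * e + 8 * ((g : ℚ) - 1)) :
    χ = (g : ℚ) ∧
    (K ≥ 4 * ((g : ℚ) - 1) →
      (4 * (g : ℚ) - 4) / (g : ℚ) ≤ K / χ ∧ K / χ ≤ 8 + 1 / (g : ℚ)) := by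
  have hgpos : (0 : ℚ) < (g : ℚ) := by
    have : (0 : ℕ) < g := by omega
    exact_mod_cast this
  have hχg : χ = (g : ℚ) := by rw [hχ, hσ, he]; ring
  refine ⟨hχg, fun hKge => ?_⟩
  have hb : (0 : ℚ) ≤ (b₂m : ℚ) := by positivity
  constructor
  · rw [hχg, div_le_div_iff₀ hgpos hgpos]
    nlinarith
  · rw [hχg, div_le_iff₀ hgpos]
    have h1 : (1 / (g:ℚ)) * (g:ℚ) = 1 := one_div_mul_cancel hgpos.ne'
    nlinarith [hK, hσ, he, h1]
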